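/- For every α ∈ (1/2, 1], ∫_0^∞ i e^{-r^{1/(2α)} sin(π/(4α))} e^{i r^{1/(2α)} cos(π/(4α))} dr = Γ(2α + 1) e^{iαπ}. -/

import Mathlib

open MeasureTheory Real Set

section helpers
lemma aux_integrable {b : ℝ} (hb : 0 < b) {s : ℝ} (hs : -1 < s) :
    IntegrableOn (fun t : ℝ => t ^ s * Real.exp (-b * t)) (Ioi 0) := by
  simpa using integrableOn_rpow_mul_exp_neg_mul_rpow hs zero_lt_one hb

open Complex in
lemma aux_norm {a : ℝ} (x : ℂ) {t : ℝ} (ht : 0 < t) :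
    ‖(t:ℂ) ^ ((a:ℂ) - 1) * Complex.exp (-x * t)‖ = t ^ (a - 1) * Real.exp (-x.re * t) := by
  rw [norm_mul, Complex.norm_exp,
    Complex.norm_cpow_eq_rpow_re_of_pos ht]
  congr 2
  · simp [Complex.mul_re]

open Complex in
lemma aux_meas (c : ℂ) (x : ℂ) :
    AEStronglyMeasurable (fun t : ℝ => (t:ℂ) ^ c * Complex.exp (-x * t))
      (volume.restrict (Ioi 0)) := by
  have : ContinuousOn (fun t : ℝ => (t:ℂ) ^ c * Complex.exp (-x * t)) (Ioi 0) := by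
    apply ContinuousOn.mul
    · intro t ht
      apply ContinuousAt.continuousWithinAt
      exact (continuousAt_cpow_const (Or.inl (by simpa using ht))).comp
        Complex.continuous_ofReal.continuousAt
    · fun_prop
  exact this.aestronglyMeasurable measurableSet_Ioi

open Complex in
lemma aux_int {a : ℝ} (ha : 0 < a) {x : ℂ} (hx : 0 < x.re) :
    IntegrableOn (fun t : ℝ => (t:ℂ) ^ ((a:ℂ) - 1) * Complex.exp (-x * t)) (Ioi 0) := by
  refine ⟨aux_meas _ _, ?_⟩
  rw [← hasFiniteIntegral_norm_iff]
  apply (HasFiniteIntegral.congr' (aux_integrable hx (s := a - 1) (by linarith)).2 ?_)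
  filter_upwards [ae_restrict_mem measurableSet_Ioi] with t ht
  have ht' : (0:ℝ) < t := ht
  rw [norm_norm, aux_norm (a := a) x ht']
  exact abs_of_nonneg (by positivity)
end helpers

open Complex in
lemma aux_gamma {a : ℝ} (ha : 0 < a) {z : ℂ} (hz : 0 < z.re) :
    ∫ t in Ioi (0:ℝ), (t:ℂ) ^ ((a:ℂ) - 1) * Complex.exp (-z * t)
      = Complex.Gamma a / z ^ (a : ℂ) := by
  set f : ℂ → ℂ :=
    fun w => ∫ t in Ioi (0:ℝ), (t:ℂ) ^ ((a:ℂ) - 1) * Complex.exp (-w * t) with hf_def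
  set g : ℂ → ℂ := fun w => Complex.Gamma a / w ^ (a : ℂ) with hg_def
  have hU : IsOpen {w : ℂ | 0 < w.re} := isOpen_lt continuous_const Complex.continuous_re
  -- differentiability of f
  have hderiv : ∀ w : ℂ, 0 < w.re → DifferentiableAt ℂ f w := by
    intro w hw
    have hε : 0 < w.re / 2 := by linarith
    have key := hasDerivAt_integral_of_dominated_loc_of_deriv_le (s := Metric.ball w (w.re / 2)) (Metric.ball_mem_nhds w hε)
      (F := fun (x : ℂ) (t : ℝ) => (t:ℂ) ^ ((a:ℂ) - 1) * Complex.exp (-x * t))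
      (F' := fun (x : ℂ) (t : ℝ) =>
        (t:ℂ) ^ ((a:ℂ) - 1) * (Complex.exp (-x * t) * -(t:ℂ)))
      (bound := fun t : ℝ => t ^ a * Real.exp (-(w.re / 2) * t))
      (μ := volume.restrict (Ioi 0)) (x₀ := w)
      (Filter.Eventually.of_forall (fun x => aux_meas _ _)) (aux_int ha hw)
      ?_ ?_ ?_ ?_
    · exact key.2.differentiableAt
    · -- measurability of F' w
      have := (aux_meas ((a:ℂ) - 1) w).mul
        ((Complex.measurable_ofReal.neg).aestronglyMeasurable)
      apply this.congr
      filter_upwards with t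
      simp only [Pi.mul_apply, Pi.neg_apply]
      ring
    · -- bound
      filter_upwards [ae_restrict_mem measurableSet_Ioi] with t ht
      intro x hx
      have ht' : (0:ℝ) < t := ht
      have hxre : w.re / 2 ≤ x.re := by
        have h1 : |(x - w).re| ≤ ‖x - w‖ := Complex.abs_re_le_norm _
        have h2 : ‖x - w‖ < w.re / 2 := by
          simpa [Complex.dist_eq] using hx
        have := abs_lt.mp (lt_of_le_of_lt h1 h2)
        simp only [Complex.sub_re] at this
        linarith [this.1]
      have hnorm : ‖(t:ℂ) ^ ((a:ℂ) - 1) * (Complex.exp (-x * t) * -(t:ℂ))‖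
          = t ^ (a - 1) * Real.exp (-x.re * t) * t := by
        rw [show (t:ℂ) ^ ((a:ℂ) - 1) * (Complex.exp (-x * t) * -(t:ℂ))
            = ((t:ℂ) ^ ((a:ℂ) - 1) * Complex.exp (-x * t)) * -(t:ℂ) by ring,
          norm_mul, aux_norm (a := a) x ht', norm_neg]
        simp [Complex.norm_of_nonneg ht'.le]
        exact Or.inl ht'.le
      rw [hnorm]
      have hpow : t ^ (a - 1) * t = t ^ a := by
        rw [← Real.rpow_add_one ht'.ne' (a - 1), sub_add_cancel]
      calc t ^ (a - 1) * Real.exp (-x.re * t) * t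
          = t ^ a * Real.exp (-x.re * t) := by rw [mul_right_comm, hpow]
        _ ≤ t ^ a * Real.exp (-(w.re / 2) * t) := by
            apply mul_le_mul_of_nonneg_left _ (by positivity)
            exact Real.exp_le_exp.mpr (by nlinarith)
    · exact aux_integrable hε (s := a) (by linarith)
    · -- differentiability of integrand
      filter_upwards with t
      intro x hx
      have h1 : HasDerivAt (fun x : ℂ => -x * t) (-(t:ℂ)) x := by
        simpa using ((hasDerivAt_id x).neg.mul_const (t:ℂ))
      exact (h1.cexp).const_mul _
  -- differentiability of g
  have hgderiv : ∀ w : ℂ, 0 < w.re → DifferentiableAt ℂ g w := by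
    intro w hw
    have hw0 : w ≠ 0 := fun h => by simp [h] at hw
    have h1 : DifferentiableAt ℂ (fun z : ℂ => z ^ (a:ℂ)) w :=
      differentiableAt_id.cpow (differentiableAt_const _) (Or.inl hw)
    refine (differentiableAt_const _).div h1 ?_
    rw [Ne, Complex.cpow_eq_zero_iff, not_and_or]
    exact Or.inl hw0
  have hfa : AnalyticOnNhd ℂ f {w : ℂ | 0 < w.re} :=
    DifferentiableOn.analyticOnNhd
      (fun w hw => (hderiv w hw).differentiableWithinAt) hU
  have hga : AnalyticOnNhd ℂ g {w : ℂ | 0 < w.re} :=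
    DifferentiableOn.analyticOnNhd
      (fun w hw => (hgderiv w hw).differentiableWithinAt) hU
  -- equality on the positive real axis
  have heq : ∀ x : ℝ, 0 < x → f (x : ℂ) = g (x : ℂ) := by
    intro x hx
    have key := Complex.integral_cpow_mul_exp_neg_mul_Ioi
      (a := (a:ℂ)) (by simpa using ha) hx
    have harg : Complex.arg (x : ℂ) ≠ Real.pi := by
      rw [Complex.arg_ofReal_of_nonneg hx.le]
      exact fun h => Real.pi_ne_zero h.symm
    rw [hf_def, hg_def]
    simp only
    rw [show (∫ t in Ioi (0:ℝ), (t:ℂ) ^ ((a:ℂ) - 1) * Complex.exp (-(x:ℂ) * t))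
        = ∫ t in Ioi (0:ℝ), (t:ℂ) ^ ((a:ℂ) - 1) * Complex.exp (-((x:ℂ) * t)) by
      simp only [neg_mul]]
    rw [key, one_div, Complex.inv_cpow _ _ harg, mul_comm, div_eq_mul_inv]
  -- identity theorem
  have h1U : (1:ℂ) ∈ {w : ℂ | 0 < w.re} := by simp
  have hfreq : ∃ᶠ x in nhdsWithin (1:ℂ) {(1:ℂ)}ᶜ, f x = g x := by
    have t0 : Filter.Tendsto (fun n : ℕ => (1 + ((n:ℝ)+1)⁻¹ : ℝ)) Filter.atTop (nhds 1) := by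
      have := (tendsto_const_nhds (x := (1:ℝ)) (f := Filter.atTop (α := ℕ))).add
        tendsto_one_div_add_atTop_nhds_zero_nat
      simpa [one_div] using this
    have t1 : Filter.Tendsto (fun n : ℕ => ((1 + ((n:ℝ)+1)⁻¹ : ℝ) : ℂ)) Filter.atTop
        (nhdsWithin (1:ℂ) {(1:ℂ)}ᶜ) := by
      rw [tendsto_nhdsWithin_iff]
      constructor
      · have := (Complex.continuous_ofReal.tendsto 1).comp t0
        simpa [Function.comp_def] using this
      · filter_upwards with n
        simp only [mem_compl_iff, mem_singleton_iff]
        intro h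
        rw [show (1:ℂ) = ((1:ℝ):ℂ) by simp] at h
        have := Complex.ofReal_injective h
        have hn : (0:ℝ) < ((n:ℝ)+1)⁻¹ := by positivity
        linarith
    exact t1.frequently (Filter.Frequently.of_forall fun n => heq _ (by positivity))
  exact hfa.eqOn_of_preconnected_of_frequently_eq hga
    (convex_halfSpace_re_gt (0:ℝ)).isPreconnected h1U hfreq hz

theorem stmt_6 (α : ℝ) (hα : α ∈ Set.Ioc (1/2 : ℝ) 1) :
    ∫ r in Set.Ioi (0:ℝ),
        Complex.I * Complex.exp (-((r ^ (1 / (2 * α)) * Real.sin (Real.pi / (4 * α)) : ℝ) : ℂ)) *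
          Complex.exp (Complex.I * ((r ^ (1 / (2 * α)) * Real.cos (Real.pi / (4 * α)) : ℝ) : ℂ))
      = (Real.Gamma (2 * α + 1) : ℂ) * Complex.exp (Complex.I * ((α * Real.pi : ℝ) : ℂ)) := by
  obtain ⟨hα1, hα2⟩ := hα
  have hα0 : 0 < α := by linarith
  have ha : 0 < 2 * α := by linarith
  have hπ := Real.pi_pos
  set θ : ℝ := Real.pi / (4 * α) with hθ_def
  have hθpos : 0 < θ := by positivity
  have hθlt : θ < Real.pi / 2 := by
    rw [hθ_def, div_lt_div_iff₀ (by linarith) (by norm_num)]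
    nlinarith
  set z : ℂ := (Real.sin θ : ℂ) - (Real.cos θ : ℂ) * Complex.I with hz_def
  have hzre : 0 < z.re := by
    have : z.re = Real.sin θ := by
      rw [hz_def]
      simp [Complex.sin_ofReal_re]
    rw [this]
    exact Real.sin_pos_of_pos_of_lt_pi hθpos (by linarith)
  have hz_exp : z = Complex.exp ((θ - Real.pi/2 : ℝ) * Complex.I) := by
    rw [Complex.exp_mul_I, ← Complex.ofReal_cos, ← Complex.ofReal_sin,
      Real.cos_sub_pi_div_two, Real.sin_sub_pi_div_two, hz_def]
    push_cast
    ring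
  have step1 : (∫ r in Set.Ioi (0:ℝ),
        Complex.I * Complex.exp (-((r ^ (1 / (2 * α)) * Real.sin θ : ℝ) : ℂ)) *
          Complex.exp (Complex.I * ((r ^ (1 / (2 * α)) * Real.cos θ : ℝ) : ℂ)))
      = ∫ r in Set.Ioi (0:ℝ),
          Complex.I * Complex.exp (-z * ((r ^ (1 / (2 * α)) : ℝ) : ℂ)) := by
    refine setIntegral_congr_fun measurableSet_Ioi (fun r hr => ?_)
    rw [mul_assoc, ← Complex.exp_add]
    congr 1
    rw [hz_def]
    push_cast
    ring
  rw [step1]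
  have step2 : (∫ r in Set.Ioi (0:ℝ),
        Complex.I * Complex.exp (-z * ((r ^ (1 / (2 * α)) : ℝ) : ℂ)))
      = ∫ x in Set.Ioi (0:ℝ), (|2 * α| * x ^ (2 * α - 1)) •
          (Complex.I * Complex.exp (-z * (((x ^ (2 * α)) ^ (1 / (2 * α)) : ℝ) : ℂ))) :=
    (integral_comp_rpow_Ioi
      (fun y => Complex.I * Complex.exp (-z * ((y ^ (1 / (2 * α)) : ℝ) : ℂ))) ha.ne').symm
  rw [step2]
  have step3 : (∫ x in Set.Ioi (0:ℝ), (|2 * α| * x ^ (2 * α - 1)) •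
          (Complex.I * Complex.exp (-z * (((x ^ (2 * α)) ^ (1 / (2 * α)) : ℝ) : ℂ))))
      = ((2 * α : ℝ) : ℂ) * Complex.I *
          ∫ x in Set.Ioi (0:ℝ), (x:ℂ) ^ (((2 * α : ℝ) : ℂ) - 1) * Complex.exp (-z * x) := by
    rw [mul_assoc, ← integral_const_mul, ← integral_const_mul]
    refine setIntegral_congr_fun measurableSet_Ioi (fun x hx => ?_)
    have hx' : (0:ℝ) < x := hx
    rw [one_div, Real.rpow_rpow_inv hx'.le ha.ne', abs_of_pos ha, Complex.real_smul,
      Complex.ofReal_mul, Complex.ofReal_cpow hx'.le]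
    push_cast
    ring
  rw [step3, aux_gamma ha hzre]
  -- compute z ^ (2α)
  have hθeq : (θ - Real.pi/2) * (2 * α) = Real.pi/2 - α * Real.pi := by
    rw [hθ_def]
    field_simp
    ring
  have hzpow : z ^ (((2 * α : ℝ)) : ℂ)
      = Complex.exp (((Real.pi/2 - α * Real.pi : ℝ)) * Complex.I) := by
    rw [hz_exp, Complex.cpow_def_of_ne_zero (Complex.exp_ne_zero _),
      Complex.log_exp (by simp; linarith) (by simp; linarith)]
    congr 1
    rw [← hθeq]
    push_cast
    ring
  have hGamma : Real.Gamma (2 * α + 1) = (2 * α) * Real.Gamma (2 * α) :=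
    Real.Gamma_add_one ha.ne'
  have hI' : Complex.exp (((Real.pi/2 : ℝ) : ℂ) * Complex.I) = Complex.I := by
    rw [Complex.exp_mul_I, ← Complex.ofReal_cos, ← Complex.ofReal_sin,
      Real.cos_pi_div_two, Real.sin_pi_div_two]
    simp
  have hprod : Complex.exp (Complex.I * ((α * Real.pi : ℝ) : ℂ)) *
      Complex.exp (((Real.pi/2 - α * Real.pi : ℝ) : ℂ) * Complex.I) = Complex.I := by
    rw [← Complex.exp_add,
      show Complex.I * ((α * Real.pi : ℝ) : ℂ) +
          ((Real.pi/2 - α * Real.pi : ℝ) : ℂ) * Complex.I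
        = ((Real.pi/2 : ℝ) : ℂ) * Complex.I by push_cast; ring, hI']
  have hEne : Complex.exp (((Real.pi/2 - α * Real.pi : ℝ) : ℂ) * Complex.I) ≠ 0 :=
    Complex.exp_ne_zero _
  rw [Complex.Gamma_ofReal, hzpow, hGamma,
    Complex.ofReal_mul (2 * α) (Real.Gamma (2 * α)),
    show ((2 * α : ℝ) : ℂ) * Complex.I *
        (((Real.Gamma (2 * α) : ℝ) : ℂ) /
          Complex.exp (((Real.pi/2 - α * Real.pi : ℝ) : ℂ) * Complex.I))
      = (((2 * α : ℝ) : ℂ) * ((Real.Gamma (2 * α) : ℝ) : ℂ) * Complex.I) /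
          Complex.exp (((Real.pi/2 - α * Real.pi : ℝ) : ℂ) * Complex.I) by ring,
    div_eq_iff hEne]
  linear_combination (-(((2 * α : ℝ) : ℂ) * ((Real.Gamma (2 * α) : ℝ) : ℂ))) * hprod
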